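/- Every complex root of the characteristic polynomial of the 12×12 integer matrix F_{3,3,3} has modulus exactly 1; in particular, the spectral radius of F_{3,3,3} equals 1. -/

import Mathlib

open Matrix

/-- Axis (0 = x, 1 = y, 2 = z) of a basis index `t ≥ 3` (curve classes):
indices `3,…,2+k` are `C_{x,i}`, indices `3+k,…,2+k+l` are `C_{y,i}`,
and the remaining indices are `C_{z,i}`. -/
def axOf (k l : ℕ) (t : ℕ) : ℕ :=
  if t < 3 + k then 0 else if t < 3 + k + l then 1 else 2

/-- The matrix of `T_x` in the basis
`E_x, E_y, E_z, C_{x,1},…,C_{x,k}, C_{y,1},…,C_{y,l}, C_{z,1},…,C_{z,m}`: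
`T_x` fixes `E_y`, `E_z` and each `C_{x,i}`, sends `C_{y,i} ↦ E_z − C_{y,i}`,
`C_{z,i} ↦ E_y − C_{z,i}`, and `E_x ↦ −E_x + 2E_y + 2E_z − (C_{x,1}+…+C_{x,k})`. -/
def Tx (k l m : ℕ) : Matrix (Fin (3 + k + l + m)) (Fin (3 + k + l + m)) ℤ :=
  fun i j =>
    if (j : ℕ) = 0 then
      if (i : ℕ) = 0 then -1
      else if (i : ℕ) < 3 then 2
      else if axOf k l i = 0 then -1 else 0
    else if (j : ℕ) < 3 then (if i = j then 1 else 0)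
    else if axOf k l j = 0 then (if i = j then 1 else 0)
    else if axOf k l j = 1 then (if (i : ℕ) = 2 then 1 else if i = j then -1 else 0)
    else (if (i : ℕ) = 1 then 1 else if i = j then -1 else 0)

/-- The matrix of `T_y`: it fixes `E_x`, `E_z` and each `C_{y,i}`, sends
`C_{x,i} ↦ E_z − C_{x,i}`, `C_{z,i} ↦ E_x − C_{z,i}`, and
`E_y ↦ 2E_x − E_y + 2E_z − (C_{y,1}+…+C_{y,l})`. -/
def Ty (k l m : ℕ) : Matrix (Fin (3 + k + l + m)) (Fin (3 + k + l + m)) ℤ :=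
  fun i j =>
    if (j : ℕ) = 1 then
      if (i : ℕ) = 1 then -1
      else if (i : ℕ) < 3 then 2
      else if axOf k l i = 1 then -1 else 0
    else if (j : ℕ) < 3 then (if i = j then 1 else 0)
    else if axOf k l j = 1 then (if i = j then 1 else 0)
    else if axOf k l j = 0 then (if (i : ℕ) = 2 then 1 else if i = j then -1 else 0)
    else (if (i : ℕ) = 0 then 1 else if i = j then -1 else 0)

/-- The matrix of `T_z`: it fixes `E_x`, `E_y` and each `C_{z,i}`, sends
`C_{x,i} ↦ E_y − C_{x,i}`, `C_{y,i} ↦ E_x − C_{y,i}`, and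
`E_z ↦ 2E_x + 2E_y − E_z − (C_{z,1}+…+C_{z,m})`. -/
def Tz (k l m : ℕ) : Matrix (Fin (3 + k + l + m)) (Fin (3 + k + l + m)) ℤ :=
  fun i j =>
    if (j : ℕ) = 2 then
      if (i : ℕ) = 2 then -1
      else if (i : ℕ) < 3 then 2
      else if axOf k l i = 2 then -1 else 0
    else if (j : ℕ) < 3 then (if i = j then 1 else 0)
    else if axOf k l j = 2 then (if i = j then 1 else 0)
    else if axOf k l j = 0 then (if (i : ℕ) = 1 then 1 else if i = j then -1 else 0)
    else (if (i : ℕ) = 0 then 1 else if i = j then -1 else 0)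

/-- The matrix of `F = T_z ∘ T_y ∘ T_x`. -/
def Fm (k l m : ℕ) : Matrix (Fin (3 + k + l + m)) (Fin (3 + k + l + m)) ℤ :=
  Tz k l m * Ty k l m * Tx k l m

/-- The characteristic polynomial (over `ℂ`) of the integer matrix `F_{k,l,m}`. -/
noncomputable def cpF (k l m : ℕ) : Polynomial ℂ :=
  Matrix.charpoly ((Fm k l m).map (fun x => (x : ℂ)))

open Polynomial in
lemma eval_charpoly_aux {n : Type*} [DecidableEq n] [Fintype n]
    (M : Matrix n n ℂ) (t : ℂ) :
    M.charpoly.eval t = (Matrix.diagonal (fun _ => t) - M).det := by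
  rw [Matrix.charpoly, ← Polynomial.coe_evalRingHom, RingHom.map_det]
  congr 1
  ext i j
  by_cases h : i = j <;>
    simp [Matrix.charmatrix_apply, h, Matrix.diagonal, Matrix.sub_apply]

lemma pow_mulVec_eig {n : ℕ} (A : Matrix (Fin n) (Fin n) ℂ) (v : Fin n → ℂ) (z : ℂ)
    (h : A *ᵥ v = z • v) : ∀ k : ℕ, (A ^ k) *ᵥ v = z ^ k • v := by
  intro k
  induction k with
  | zero => simp
  | succ k ih =>
      rw [pow_succ, ← Matrix.mulVec_mulVec, h, Matrix.mulVec_smul, ih, smul_smul]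
      ring_nf

set_option maxRecDepth 10000 in
lemma annF : ((Fm 3 3 3) - 1)^3 * ((Fm 3 3 3) + 1) * ((Fm 3 3 3)^2 + 1) = 0 := by
  ext i j
  fin_cases i <;> fin_cases j <;> decide

/-- the integer eigenvector (0,0,0,1,-1,0,0,0,0,0,0,0) for eigenvalue 1 -/
def w : Fin (3 + 3 + 3 + 3) → ℤ := fun j => if (j : ℕ) = 3 then 1 else if (j : ℕ) = 4 then -1 else 0

set_option maxRecDepth 10000 in
lemma eigw : (Matrix.diagonal (fun _ => (1:ℤ)) - Fm 3 3 3) *ᵥ w = 0 := by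
  funext i
  fin_cases i <;> decide

/-- The complex matrix of `F_{3,3,3}`. -/
noncomputable def Fc : Matrix (Fin (3+3+3+3)) (Fin (3+3+3+3)) ℂ :=
  (Fm 3 3 3).map (fun x => (x : ℂ))

lemma cpF_eq : cpF 3 3 3 = Fc.charpoly := rfl

lemma FcRH : Fc = ((Int.castRingHom ℂ).mapMatrix (Fm 3 3 3)) := rfl

lemma annFc : (Fc - 1)^3 * (Fc + 1) * (Fc^2 + 1) = 0 := by
  have h := congrArg ((Int.castRingHom ℂ).mapMatrix) annF
  simp only [_root_.map_mul, map_pow, map_sub, _root_.map_add, _root_.map_one, map_zero] at h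
  rw [FcRH]
  exact h

/-- Every complex root of the characteristic polynomial of `F_{3,3,3}` has modulus
exactly `1`; in particular (since roots exist), the spectral radius of `F_{3,3,3}`
equals `1`. -/
theorem specRad_F333 :
    (∀ z : ℂ, (cpF 3 3 3).IsRoot z → ‖z‖ = 1) ∧
    (∃ z : ℂ, (cpF 3 3 3).IsRoot z ∧ ‖z‖ = 1) := by
  constructor
  · intro z hz
    have hdet : (Matrix.diagonal (fun _ => z) - Fc).det = 0 := by
      rw [← eval_charpoly_aux Fc z, ← cpF_eq]
      exact hz
    obtain ⟨v, hv, hmv⟩ := Matrix.exists_mulVec_eq_zero_iff.mpr hdet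
    have heig : Fc *ᵥ v = z • v := by
      have h1 : (Matrix.diagonal (fun _ => z)) *ᵥ v - Fc *ᵥ v = 0 := by
        rw [← Matrix.sub_mulVec]; exact hmv
      have h2 : (Matrix.diagonal (fun _ => z)) *ᵥ v = z • v := by
        funext i; simp [Matrix.mulVec_diagonal]
      rw [h2] at h1
      linear_combination (norm := module) -h1
    have key : ((z - 1)^3 * ((z + 1) * (z^2 + 1))) • v = 0 := by
      have h3 : (Fc^2 + 1) *ᵥ v = (z^2 + 1) • v := by
        rw [Matrix.add_mulVec, pow_mulVec_eig Fc v z heig 2, Matrix.one_mulVec]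
        module
      have h4 : ((Fc + 1) * (Fc^2 + 1)) *ᵥ v = ((z + 1) * (z^2 + 1)) • v := by
        rw [← Matrix.mulVec_mulVec, h3, Matrix.mulVec_smul, Matrix.add_mulVec, heig,
          Matrix.one_mulVec]
        module
      have h5 : (Fc - 1) *ᵥ v = (z - 1) • v := by
        rw [Matrix.sub_mulVec, heig, Matrix.one_mulVec]
        module
      have h6 : ((Fc - 1)^3) *ᵥ v = (z - 1)^3 • v := pow_mulVec_eig (Fc - 1) v (z - 1) h5 3
      have h7 : ((Fc - 1)^3 * ((Fc + 1) * (Fc^2 + 1))) *ᵥ v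
          = ((z - 1)^3 * ((z + 1) * (z^2 + 1))) • v := by
        rw [← Matrix.mulVec_mulVec, h4, Matrix.mulVec_smul, h6, smul_smul]
        ring_nf
      rw [← h7, ← mul_assoc, annFc, Matrix.zero_mulVec]
    have hz0 : (z - 1)^3 * ((z + 1) * (z^2 + 1)) = 0 := by
      rcases smul_eq_zero.mp key with h | h
      · exact h
      · exact absurd h hv
    rcases mul_eq_zero.mp hz0 with h | h
    · have h1 : z - 1 = 0 := pow_eq_zero_iff (by norm_num) |>.mp h
      have : z = 1 := sub_eq_zero.mp h1
      simp [this]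
    · rcases mul_eq_zero.mp h with h | h
      · have : z = -1 := by linear_combination h
        simp [this]
      · have h2 : z^2 = -1 := by linear_combination h
        have habs : (‖z‖)^2 = 1 := by
          rw [← norm_pow, h2]; simp
        nlinarith [norm_nonneg z, habs]
  · refine ⟨1, ?_, by simp⟩
    show (cpF 3 3 3).eval 1 = 0
    rw [cpF_eq, eval_charpoly_aux]
    apply Matrix.exists_mulVec_eq_zero_iff.mp
    refine ⟨fun i => ((w i : ℂ)), ?_, ?_⟩
    · intro h
      have := congrFun h ⟨3, by norm_num⟩
      simp [w] at this
    · have hmap : Matrix.diagonal (fun _ => (1:ℂ)) - Fc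
          = ((Matrix.diagonal (fun _ => (1:ℤ)) - Fm 3 3 3).map (fun x => (x : ℂ))) := by
        rw [FcRH]
        show _ = ((Int.castRingHom ℂ).mapMatrix) _
        rw [map_sub]
        congr 1
        ext i j
        by_cases hij : i = j <;> simp [Matrix.diagonal, hij]
      rw [hmap]
      have hc : (fun i => ((w i : ℂ))) = fun i => ((w i : ℂ)) := rfl
      calc ((Matrix.diagonal (fun _ => (1:ℤ)) - Fm 3 3 3).map (fun x => (x : ℂ)))
            *ᵥ (fun i => ((w i : ℂ)))
          = fun i => ((((Matrix.diagonal (fun _ => (1:ℤ)) - Fm 3 3 3) *ᵥ w) i : ℂ)) := by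
            funext i
            exact ((Int.castRingHom ℂ).map_mulVec _ w i).symm
        _ = 0 := by rw [eigw]; funext i; simp
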